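/- Let R be a commutative ring, let m ≥ 1 be a natural number, and define R-linear endomorphisms U and V of the ring of formal power series R[[q]] by: U takes a power series with n-th coefficient a_n to the power series with n-th coefficient a_{mn}, and V takes a power series with n-th coefficient a_n to the power series whose (mn)-th coefficient is a_n and whose other coefficients are 0. Then U ∘ V is the identity, and for all a, c ∈ R and every natural number k ≥ 1, the operator identity U^k ∘ (U + c·V − a)^k = (U² − a·U + c)^k holds, where a and c act as scalar multiplication. -/

import Mathlib

/-- Let `U` and `V` be the `R`-linear endomorphisms of `R[[q]]` given on coefficients by
`U : aₙ ↦ a_{mn}` (coefficient extraction along multiples of `m`) and `V` (spreading the `n`-th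
coefficient to the `mn`-th spot, with all other coefficients zero). Then `U ∘ V = 1` and, for all
`a c : R` and `k ≥ 1`, the operator identity `U^k ∘ (U + c·V - a)^k = (U² - a·U + c)^k` holds. -/
theorem stmt_11 (R : Type) [CommRing R] (m : ℕ) (hm : 1 ≤ m)
    (U V : Module.End R (PowerSeries R))
    (hU : ∀ (f : PowerSeries R) (n : ℕ),
      PowerSeries.coeff n (U f) = PowerSeries.coeff (m * n) f)
    (hV : ∀ (f : PowerSeries R) (n : ℕ),
      PowerSeries.coeff (m * n) (V f) = PowerSeries.coeff n f)
    (hV0 : ∀ (f : PowerSeries R) (j : ℕ), ¬ m ∣ j → PowerSeries.coeff j (V f) = 0) :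
    U * V = 1 ∧
      ∀ (a c : R) (k : ℕ), 1 ≤ k →
        U ^ k * (U + c • V - a • (1 : Module.End R (PowerSeries R))) ^ k
          = (U ^ 2 - a • U + c • (1 : Module.End R (PowerSeries R))) ^ k := by
  have hUV : U * V = 1 := by
    apply LinearMap.ext
    intro f
    apply PowerSeries.ext
    intro n
    simp [Module.End.mul_apply, hU, hV]
  refine ⟨hUV, ?_⟩
  intro a c k hk
  set X := U + c • V - a • (1 : Module.End R (PowerSeries R)) with hX
  set W := U ^ 2 - a • U + c • (1 : Module.End R (PowerSeries R)) with hW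
  have hUX : U * X = W := by
    rw [hX, hW]
    rw [mul_sub, mul_add, mul_smul_comm, mul_smul_comm, hUV, mul_one, sq]
    abel
  have hC : Commute U W := by
    rw [hW]
    exact (((Commute.refl U).pow_right 2).sub_right
      ((Commute.refl U).smul_right a)).add_right ((Commute.one_right U).smul_right c)
  have key : ∀ k, U ^ k * X ^ k = W ^ k := by
    intro k
    induction k with
    | zero => simp
    | succ n ih =>
      calc U ^ (n+1) * X ^ (n+1) = U ^ n * (U * X) * X ^ n := by
              rw [pow_succ, pow_succ', mul_assoc, ← mul_assoc U, ← mul_assoc]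
        _ = (U ^ n * W) * X ^ n := by rw [hUX]
        _ = W * (U ^ n * X ^ n) := by
              rw [(hC.pow_left n).eq, mul_assoc]
        _ = W ^ (n+1) := by rw [ih, ← pow_succ']
  exact key k
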